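/- For every n ≥ 3 and every parameter collection c, the characteristic variety Σ(c) is nonempty; that is, there exists ξ ∈ ℝ^n \ {0} with det P(ξ, c) = 0. -/

import Mathlib

open Matrix

/-- A parameter collection: `c i k j` denotes `c_i^{kj}`, symmetric in the two
superscripts, with normalizations `c_i^{ii} = 1` and `c_i^{jj} = 0` for `i ≠ j`. -/
def IsParamColl (n : ℕ) (c : Fin n → Fin n → Fin n → ℝ) : Prop :=
  (∀ i j k : Fin n, j ≠ k → c i k j = c i j k) ∧
  (∀ i : Fin n, c i i i = 1) ∧
  (∀ i j : Fin n, i ≠ j → c i j j = 0)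

/-- The principal symbol `P(ξ, c) = Σ_k ξ_k A^k`, where `(A^k)_{ij} = c_i^{kj}`. -/
def pSymb {n : ℕ} (ξ : Fin n → ℝ) (c : Fin n → Fin n → Fin n → ℝ) :
    Matrix (Fin n) (Fin n) ℝ :=
  Matrix.of fun i j => ∑ k, ξ k * c i k j

open Set Filter Topology

namespace CharVar

variable {n : ℕ}

/-- The commutative (non-associative) product attached to `c`. -/
noncomputable def mulv (c : Fin n → Fin n → Fin n → ℝ) (x y : Fin n → ℝ) : Fin n → ℝ :=
  (pSymb x c).mulVec y

lemma mulv_apply (c : Fin n → Fin n → Fin n → ℝ) (x y : Fin n → ℝ) (i : Fin n) :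
    mulv c x y i = ∑ j, (∑ k, x k * c i k j) * y j := by
  simp [mulv, Matrix.mulVec, dotProduct, pSymb]

lemma mulv_comm {c : Fin n → Fin n → Fin n → ℝ} (hc : IsParamColl n c) (x y : Fin n → ℝ) :
    mulv c x y = mulv c y x := by
  funext i
  rw [mulv_apply, mulv_apply]
  have h1 : ∀ z w : Fin n → ℝ,
      (∑ j, (∑ k, z k * c i k j) * w j) = ∑ j, ∑ k, z k * c i k j * w j := by
    intro z w
    exact Finset.sum_congr rfl fun j _ => by rw [Finset.sum_mul]
  rw [h1, h1, Finset.sum_comm]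
  refine Finset.sum_congr rfl fun k _ => Finset.sum_congr rfl fun j _ => ?_
  by_cases h : j = k
  · subst h; ring
  · rw [hc.1 i j k h]; ring

lemma mulv_single {c : Fin n → Fin n → Fin n → ℝ} (hc : IsParamColl n c) (i : Fin n) :
    mulv c (Pi.single i 1) (Pi.single i 1) = Pi.single i 1 := by
  funext l
  rw [mulv_apply]
  have h1 : ∀ j, (∑ k, (Pi.single i 1 : Fin n → ℝ) k * c l k j) = c l i j := by
    intro j
    rw [Finset.sum_eq_single i]
    · simp
    · intro b _ hb; simp [Pi.single_apply, hb]
    · simp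
  have h2 : (∑ j, (∑ k, (Pi.single i 1 : Fin n → ℝ) k * c l k j) * (Pi.single i 1 : Fin n → ℝ) j) = c l i i := by
    rw [Finset.sum_eq_single i]
    · rw [h1]; simp
    · intro b _ hb; simp [Pi.single_apply, hb]
    · simp
  rw [h2]
  by_cases h : l = i
  · subst h; simp [hc.2.1 l]
  · simp [Pi.single_apply, h, hc.2.2 l i h]

lemma pSymb_add (c : Fin n → Fin n → Fin n → ℝ) (x y : Fin n → ℝ) :
    pSymb (x + y) c = pSymb x c + pSymb y c := by
  ext i j
  simp [pSymb, add_mul, Finset.sum_add_distrib]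

lemma pSymb_smul (c : Fin n → Fin n → Fin n → ℝ) (a : ℝ) (x : Fin n → ℝ) :
    pSymb (a • x) c = a • pSymb x c := by
  ext i j
  simp [pSymb, Finset.mul_sum, mul_assoc]

lemma pSymb_neg (c : Fin n → Fin n → Fin n → ℝ) (x : Fin n → ℝ) :
    pSymb (-x) c = -(pSymb x c) := by
  ext i j
  simp [pSymb, Finset.sum_neg_distrib]

lemma mulv_add_left (c : Fin n → Fin n → Fin n → ℝ) (x y z : Fin n → ℝ) :
    mulv c (x + y) z = mulv c x z + mulv c y z := by
  simp [mulv, pSymb_add, Matrix.add_mulVec]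

lemma mulv_add_right (c : Fin n → Fin n → Fin n → ℝ) (x y z : Fin n → ℝ) :
    mulv c x (y + z) = mulv c x y + mulv c x z := by
  simp [mulv, Matrix.mulVec_add]

lemma mulv_smul_left (c : Fin n → Fin n → Fin n → ℝ) (a : ℝ) (x y : Fin n → ℝ) :
    mulv c (a • x) y = a • mulv c x y := by
  simp [mulv, pSymb_smul, Matrix.smul_mulVec]

lemma mulv_smul_right (c : Fin n → Fin n → Fin n → ℝ) (a : ℝ) (x y : Fin n → ℝ) :
    mulv c x (a • y) = a • mulv c x y := by
  simp [mulv, Matrix.mulVec_smul]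

lemma mulv_neg_neg (c : Fin n → Fin n → Fin n → ℝ) (x y : Fin n → ℝ) :
    mulv c (-x) (-y) = mulv c x y := by
  simp [mulv, pSymb_neg, Matrix.neg_mulVec, Matrix.mulVec_neg]

lemma mulv_zero_zero (c : Fin n → Fin n → Fin n → ℝ) : mulv c 0 0 = 0 := by
  simp [mulv, Matrix.mulVec_zero]

/-- the product as a linear-map-valued linear map, continuous version. -/
noncomputable def mulL (c : Fin n → Fin n → Fin n → ℝ) :
    (Fin n → ℝ) →ₗ[ℝ] ((Fin n → ℝ) →L[ℝ] (Fin n → ℝ)) where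
  toFun x := LinearMap.toContinuousLinearMap ((pSymb x c).mulVecLin)
  map_add' x y := by
    ext v
    simp [pSymb_add, Matrix.add_mulVec]
  map_smul' a x := by
    ext v
    simp [pSymb_smul, Matrix.smul_mulVec]

noncomputable def mulCLM (c : Fin n → Fin n → Fin n → ℝ) :
    (Fin n → ℝ) →L[ℝ] ((Fin n → ℝ) →L[ℝ] (Fin n → ℝ)) :=
  LinearMap.toContinuousLinearMap (mulL c)

lemma mulCLM_apply (c : Fin n → Fin n → Fin n → ℝ) (x y : Fin n → ℝ) :
    mulCLM c x y = mulv c x y := by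
  simp [mulCLM, mulL, mulv]

end CharVar

namespace CharVar

variable {n : ℕ} {c : Fin n → Fin n → Fin n → ℝ}

lemma zero_div (hdet : ∀ ξ : Fin n → ℝ, ξ ≠ 0 → (pSymb ξ c).det ≠ 0)
    {x y : Fin n → ℝ} (hx : x ≠ 0) (hxy : mulv c x y = 0) : y = 0 := by
  by_contra hy
  exact hdet x hx (Matrix.exists_mulVec_eq_zero_iff.mp ⟨y, hy, hxy⟩)

lemma sq_eq_zero (hdet : ∀ ξ : Fin n → ℝ, ξ ≠ 0 → (pSymb ξ c).det ≠ 0)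
    {x : Fin n → ℝ} (hx : mulv c x x = 0) : x = 0 := by
  by_contra hx0
  exact hx0 (zero_div hdet hx0 hx)

lemma mulv_neg_right (c : Fin n → Fin n → Fin n → ℝ) (x y : Fin n → ℝ) :
    mulv c x (-y) = -(mulv c x y) := by
  simp [mulv, Matrix.mulVec_neg]

lemma sq_dich (hc : IsParamColl n c)
    (hdet : ∀ ξ : Fin n → ℝ, ξ ≠ 0 → (pSymb ξ c).det ≠ 0)
    (x y : Fin n → ℝ) (h : mulv c x x = mulv c y y) : x = y ∨ x = -y := by
  have key : mulv c (x + y) (x - y) = 0 := by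
    rw [sub_eq_add_neg, mulv_add_left, mulv_add_right, mulv_add_right, mulv_neg_right,
      mulv_neg_right, mulv_comm hc y x, h]
    abel
  by_cases hxy : x + y = 0
  · exact Or.inr (eq_neg_of_add_eq_zero_left hxy)
  · exact Or.inl (sub_eq_zero.mp (zero_div hdet hxy key))

lemma q_smul_sq (c : Fin n → Fin n → Fin n → ℝ) (a : ℝ) (x : Fin n → ℝ) :
    mulv c (a • x) (a • x) = (a^2) • mulv c x x := by
  rw [mulv_smul_left, mulv_smul_right, smul_smul]
  ring_nf

/-- openness of the square map at nonzero points -/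
lemma q_open (hc : IsParamColl n c)
    (hdet : ∀ ξ : Fin n → ℝ, ξ ≠ 0 → (pSymb ξ c).det ≠ 0)
    (x : Fin n → ℝ) (hx : x ≠ 0) :
    Filter.map (fun v => mulv c v v) (nhds x) = nhds (mulv c x x) := by
  have hb := (mulCLM c).isBoundedBilinearMap
  have hdiag : HasStrictFDerivAt (fun v : Fin n → ℝ => (v, v))
      ((ContinuousLinearMap.id ℝ (Fin n → ℝ)).prod (ContinuousLinearMap.id ℝ (Fin n → ℝ))) x :=
    HasStrictFDerivAt.prodMk (hasStrictFDerivAt_id x) (hasStrictFDerivAt_id x)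
  set D : (Fin n → ℝ) →L[ℝ] (Fin n → ℝ) :=
    (hb.deriv (x, x)).comp
      ((ContinuousLinearMap.id ℝ (Fin n → ℝ)).prod (ContinuousLinearMap.id ℝ (Fin n → ℝ))) with hD
  have hq : HasStrictFDerivAt (fun v => mulv c v v) D x := by
    have h0 := HasStrictFDerivAt.comp (f := fun v : Fin n → ℝ => (v, v)) x (hb.hasStrictFDerivAt (x, x)) hdiag
    have heq : (fun v : Fin n → ℝ => mulv c v v)
        = ((fun p : (Fin n → ℝ) × (Fin n → ℝ) => mulCLM c p.1 p.2) ∘ fun v => (v, v)) := by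
      funext v
      simp [Function.comp, mulCLM_apply]
    rw [heq]
    exact h0
  have hDapp : ∀ h : Fin n → ℝ, D h = mulv c x h + mulv c h x := by
    intro h
    simp [hD, hb.deriv_apply, mulCLM_apply]
  have hinj : Function.Injective D := by
    intro a b hab
    have h0 : D (a - b) = 0 := by
      rw [map_sub, hab, sub_self]
    rw [hDapp] at h0
    rw [mulv_comm hc (a-b) x] at h0
    have h1 : mulv c x (a - b) = 0 := by
      have h2 : (2:ℝ) • mulv c x (a - b) = 0 := by
        rw [two_smul]; exact h0
      rcases smul_eq_zero.mp h2 with h3 | h3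
      · norm_num at h3
      · exact h3
    have := zero_div hdet hx h1
    exact sub_eq_zero.mp this
  have hsurj : Function.Surjective D :=
    LinearMap.injective_iff_surjective.mp hinj
  let e : (Fin n → ℝ) ≃ₗ[ℝ] (Fin n → ℝ) :=
    LinearEquiv.ofBijective (D : (Fin n → ℝ) →ₗ[ℝ] (Fin n → ℝ)) ⟨hinj, hsurj⟩
  let e' : (Fin n → ℝ) ≃L[ℝ] (Fin n → ℝ) := e.toContinuousLinearEquiv
  have he' : (e' : (Fin n → ℝ) →L[ℝ] (Fin n → ℝ)) = D := by
    refine ContinuousLinearMap.ext fun h => ?_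
    show e' h = D h
    simp [e', e, LinearEquiv.coe_toContinuousLinearEquiv]
    rfl
  have hq' : HasStrictFDerivAt (fun v => mulv c v v)
      (e' : (Fin n → ℝ) →L[ℝ] (Fin n → ℝ)) x := by
    rw [he']; exact hq
  exact hq'.map_nhds_eq_of_equiv


set_option maxHeartbeats 1600000 in
lemma core {E : Type*} [NormedAddCommGroup E] [NormedSpace ℝ E] [FiniteDimensional ℝ E]
    (q : E → E) (γ : ℝ → E) (H : ℝ × ℝ → E)
    (hqc : Continuous q) (hγc : Continuous γ) (hHc : Continuous H)
    (hq0 : q 0 = 0)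
    (hqeven : ∀ x, q (-x) = q x)
    (hqdich : ∀ x y, q x = q y → x = y ∨ x = -y)
    (hqopen : ∀ x, x ≠ 0 → Filter.map q (nhds x) = nhds (q x))
    (m : ℝ) (hm : 0 < m) (hqlow : ∀ x, m * ‖x‖^2 ≤ ‖q x‖)
    (hH0 : ∀ θ : ℝ, H (0, θ) = q (γ θ))
    (hHtop : ∀ θ : ℝ, H (1, θ) = H (1, 0))
    (hHper : ∀ s : ℝ, H (s, 0) = H (s, 1))
    (hHne : ∀ p : ℝ × ℝ, p ∈ Icc (0:ℝ) 1 ×ˢ Icc (0:ℝ) 1 → H p ≠ 0)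
    (hγ1 : γ 1 = - γ 0) : False := by
  classical
  set R : Set (ℝ × ℝ) := Icc (0:ℝ) 1 ×ˢ Icc (0:ℝ) 1 with hR
  have hRcomp : IsCompact R := isCompact_Icc.prod isCompact_Icc
  have hRne : ((0:ℝ),(0:ℝ)) ∈ R := by
    constructor <;> exact ⟨le_refl 0, zero_le_one⟩
  have himcomp : IsCompact (H '' R) := hRcomp.image hHc
  obtain ⟨y₀, hy₀, hy₀min⟩ :=
    himcomp.exists_isMinOn ⟨H (0,0), ⟨_, hRne, rfl⟩⟩ continuous_norm.continuousOn
  set a₀ := ‖y₀‖ with ha₀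
  have ha₀pos : 0 < a₀ := by
    obtain ⟨pp, hpp, rfl⟩ := hy₀
    exact norm_pos_iff.mpr (hHne pp hpp)
  obtain ⟨δ₀, hδ₀pos, hδ₀⟩ := Metric.continuousAt_iff.mp hqc.continuousAt a₀ ha₀pos
  set K : Set E := q ⁻¹' (H '' R) with hK
  have hKnorm : ∀ x ∈ K, δ₀ ≤ ‖x‖ := by
    intro x hx
    by_contra hcon
    push_neg at hcon
    have h1 : dist x 0 < δ₀ := by simpa [dist_zero_right] using hcon
    have h2 := hδ₀ h1
    rw [hq0, dist_zero_right] at h2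
    have h3 : a₀ ≤ ‖q x‖ := isMinOn_iff.mp hy₀min _ hx
    linarith
  obtain ⟨yM, hyM, hyMmax⟩ :=
    himcomp.exists_isMaxOn ⟨H (0,0), ⟨_, hRne, rfl⟩⟩ continuous_norm.continuousOn
  set bK := ‖yM‖ with hbK
  have hKbound : ∀ x ∈ K, ‖x‖ ≤ max 1 (bK / m) := by
    intro x hx
    have h1 : m * ‖x‖^2 ≤ bK := le_trans (hqlow x) (isMaxOn_iff.mp hyMmax _ hx)
    by_cases hx1 : ‖x‖ ≤ 1
    · exact le_trans hx1 (le_max_left _ _)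
    · push_neg at hx1
      have h2 : ‖x‖ ≤ bK / m := by
        rw [le_div_iff₀ hm]
        have h3 : ‖x‖ * m ≤ ‖x‖ ^ 2 * m := by
          nlinarith [mul_le_mul_of_nonneg_right hx1.le (mul_nonneg (norm_nonneg x) hm.le)]
        nlinarith
      exact le_trans h2 (le_max_right _ _)
  have hKcomp : IsCompact K := by
    have hclosed : IsClosed K := (himcomp.isClosed).preimage hqc
    have hsub : K ⊆ Metric.closedBall 0 (max 1 (bK / m)) := by
      intro x hx
      simpa [Metric.mem_closedBall, dist_zero_right] using hKbound x hx
    exact (isCompact_closedBall (0:E) _).of_isClosed_subset hclosed hsub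
  set ε := δ₀ / 3 with hε
  have hεpos : 0 < ε := by positivity
  -- uniqueness of nearby preimages
  have huniq : ∀ (x w w' : E), w ∈ K → q w = q w' → ‖w - x‖ ≤ ε → ‖w' - x‖ ≤ ε → w = w' := by
    intro x w w' hwK hqq hw hw'
    rcases hqdich w w' hqq with h | h
    · exact h
    · exfalso
      have hw'w : w' = -w := by
        rw [h]; simp
      have h1 : ‖w - w'‖ ≤ 2 * ε := by
        calc ‖w - w'‖ = ‖(w - x) - (w' - x)‖ := by abel_nf
        _ ≤ ‖w - x‖ + ‖w' - x‖ := norm_sub_le _ _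
        _ ≤ 2 * ε := by linarith
      have h2 : ‖w - w'‖ = 2 * ‖w‖ := by
        rw [hw'w]
        have : w - -w = (2:ℝ) • w := by
          rw [two_smul]; abel
        rw [this, norm_smul]
        simp
      have h3 := hKnorm w hwK
      rw [h2] at h1
      rw [hε] at h1
      linarith
  -- the uniform branch radius
  have hstep : ∀ x ∈ K, ∃ r > 0, ∃ δ > 0,
      ∀ x', ‖x' - x‖ < δ → ∀ y : E, ‖y - q x'‖ < r → ∃ w, q w = y ∧ ‖w - x'‖ ≤ ε := by
    intro x hx
    have hx0 : x ≠ 0 := by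
      intro h
      have := hKnorm x hx
      rw [h] at this
      simp at this
      linarith
    have hball : q '' Metric.ball x (ε/2) ∈ nhds (q x) := by
      rw [← hqopen x hx0]
      exact mem_map.mpr (mem_of_superset (Metric.ball_mem_nhds x (by positivity))
        (Set.subset_preimage_image q _))
    obtain ⟨r0, hr0pos, hr0sub⟩ := Metric.mem_nhds_iff.mp hball
    obtain ⟨δ1, hδ1pos, hδ1⟩ := Metric.continuousAt_iff.mp hqc.continuousAt (r0/2) (by positivity)
    refine ⟨r0/2, by positivity, min δ1 (ε/2), by positivity, ?_⟩
    intro x' hx' y hy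
    have hdq : dist (q x') (q x) < r0/2 := by
      apply hδ1
      rw [dist_eq_norm]
      exact lt_of_lt_of_le hx' (min_le_left _ _)
    have hy2 : y ∈ Metric.ball (q x) r0 := by
      rw [Metric.mem_ball, dist_eq_norm]
      calc ‖y - q x‖ ≤ ‖y - q x'‖ + ‖q x' - q x‖ := by
            have : y - q x = (y - q x') + (q x' - q x) := by abel
            rw [this]; exact norm_add_le _ _
      _ < r0/2 + r0/2 := by
            rw [dist_eq_norm] at hdq
            exact add_lt_add hy hdq
      _ = r0 := by ring
    obtain ⟨w, hwball, hwy⟩ := hr0sub hy2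
    refine ⟨w, hwy, ?_⟩
    have h1 : ‖w - x‖ < ε/2 := by
      rw [Metric.mem_ball, dist_eq_norm] at hwball
      exact hwball
    have h2 : ‖x' - x‖ < ε/2 := lt_of_lt_of_le hx' (min_le_right _ _)
    calc ‖w - x'‖ = ‖(w - x) - (x' - x)‖ := by abel_nf
    _ ≤ ‖w - x‖ + ‖x' - x‖ := norm_sub_le _ _
    _ ≤ ε := by linarith
  choose! rr hrrpos dd hddpos hbranch using hstep
  -- K is nonempty
  have hγ0K : γ 0 ∈ K := by
    rw [hK, Set.mem_preimage, ← hH0 0]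
    exact ⟨_, hRne, rfl⟩
  -- finite subcover
  obtain ⟨t, htK, htcov⟩ := hKcomp.elim_nhds_subcover (fun x => Metric.ball x (dd x))
    (fun x hx => Metric.ball_mem_nhds x (hddpos x hx))
  have htne : t.Nonempty := by
    by_contra hte
    rw [Finset.not_nonempty_iff_eq_empty] at hte
    have := htcov hγ0K
    rw [hte] at this
    simp at this
  set ρ : ℝ := t.inf' htne rr with hρdef
  have hρpos : 0 < ρ := by
    rw [hρdef, Finset.lt_inf'_iff]
    intro b hb
    exact hrrpos b (htK b hb)
  have hρclaim : ∀ x ∈ K, ∀ y : E, ‖y - q x‖ < ρ → ∃ w, q w = y ∧ ‖w - x‖ ≤ ε := by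
    intro x hx y hy
    have := htcov hx
    rw [Set.mem_iUnion₂] at this
    obtain ⟨x₀, hx₀t, hxball⟩ := this
    have hx₀K := htK x₀ hx₀t
    refine hbranch x₀ hx₀K x ?_ y ?_
    · rw [Metric.mem_ball, dist_eq_norm] at hxball
      exact hxball
    · exact lt_of_lt_of_le hy (Finset.inf'_le _ hx₀t)
  -- uniform continuity and grid size
  have hUC := hRcomp.uniformContinuousOn_of_continuous hHc.continuousOn
  rw [Metric.uniformContinuousOn_iff] at hUC
  obtain ⟨δ₁, hδ₁pos, hδ₁⟩ := hUC ρ hρpos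
  obtain ⟨N0, hN0⟩ := exists_nat_gt (1/δ₁)
  set Nn : ℕ := N0 + 1 with hNn
  have hNnpos : (0:ℝ) < Nn := by
    rw [hNn]; positivity
  have hNnstep : 1 / (Nn:ℝ) < δ₁ := by
    have h1 : 1/δ₁ < (Nn:ℝ) := by
      calc 1/δ₁ < N0 := hN0
      _ ≤ (Nn:ℝ) := by rw [hNn]; push_cast; linarith
    rw [div_lt_iff₀ hNnpos]
    rw [div_lt_iff₀ hδ₁pos] at h1
    linarith
  set sk : ℕ → ℝ := fun k => (k : ℝ) / Nn with hskdef
  have hskapp : ∀ k : ℕ, sk k = (k : ℝ) / Nn := fun _ => rfl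
  have hsk : ∀ k, k ≤ Nn → sk k ∈ Icc (0:ℝ) 1 := by
    intro k hk
    constructor
    · positivity
    · rw [hskapp, div_le_one hNnpos]
      exact_mod_cast hk
  have hHstep : ∀ k, k + 1 ≤ Nn → ∀ θ ∈ Icc (0:ℝ) 1,
      ‖H (sk (k+1), θ) - H (sk k, θ)‖ < ρ := by
    intro k hk θ hθ
    have h1 : ((sk (k+1), θ) : ℝ × ℝ) ∈ R := ⟨hsk (k+1) hk, hθ⟩
    have h2 : ((sk k, θ) : ℝ × ℝ) ∈ R := ⟨hsk k (le_trans (Nat.le_succ k) hk), hθ⟩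
    have h3 : dist ((sk (k+1), θ) : ℝ × ℝ) ((sk k, θ) : ℝ × ℝ) < δ₁ := by
      rw [Prod.dist_eq]
      have hd2 : dist θ θ = 0 := by simp
      have hd1 : dist (sk (k+1)) (sk k) = 1 / (Nn:ℝ) := by
        rw [hskapp, hskapp, Real.dist_eq]
        rw [show ((k+1:ℕ):ℝ)/(Nn:ℝ) - ((k:ℕ):ℝ)/(Nn:ℝ) = 1/(Nn:ℝ) by push_cast; ring]
        exact abs_of_pos (by positivity)
      rw [hd2, hd1]
      rw [max_eq_left (by positivity)]
      exact hNnstep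
    have := hδ₁ _ h1 _ h2 h3
    rwa [dist_eq_norm] at this
  -- the discrete lift
  obtain ⟨xx, hxx0, hxxsucc⟩ : ∃ xx : ℕ → ℝ → E, (∀ θ, xx 0 θ = γ θ) ∧
      ∀ k θ, xx (k+1) θ = Classical.epsilon
        (fun w => q w = H (sk (k+1), θ) ∧ ‖w - xx k θ‖ ≤ ε) :=
    ⟨fun k => Nat.rec (fun θ => γ θ)
      (fun k prev θ => Classical.epsilon
        (fun w => q w = H (sk (k+1), θ) ∧ ‖w - prev θ‖ ≤ ε)) k,
      fun _ => rfl, fun _ _ => rfl⟩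
  -- main invariant
  have hmain : ∀ k, k ≤ Nn → ∀ θ ∈ Icc (0:ℝ) 1,
      q (xx k θ) = H (sk k, θ) ∧ (k ≥ 1 → ‖xx k θ - xx (k-1) θ‖ ≤ ε) := by
    intro k
    induction k with
    | zero =>
      intro _ θ hθ
      have hsk0 : sk 0 = 0 := by rw [hskapp]; norm_num
      constructor
      · rw [hxx0 θ, hsk0, hH0]
      · intro h
        exact absurd h (by omega)
    | succ k IH =>
      intro hk1 θ hθ
      have hk : k ≤ Nn := le_trans (Nat.le_succ k) hk1
      have hprev := (IH hk θ hθ).1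
      have hprevK : xx k θ ∈ K := by
        rw [hK, Set.mem_preimage, hprev]
        exact ⟨_, ⟨hsk k hk, hθ⟩, rfl⟩
      have hex : ∃ w, q w = H (sk (k+1), θ) ∧ ‖w - xx k θ‖ ≤ ε := by
        apply hρclaim _ hprevK
        rw [hprev]
        exact hHstep k hk1 θ hθ
      have hspec := Classical.epsilon_spec hex
      rw [hxxsucc]
      refine ⟨hspec.1, fun _ => ?_⟩
      simpa using hspec.2
  have hdist : ∀ k, k + 1 ≤ Nn → ∀ θ ∈ Icc (0:ℝ) 1, ‖xx (k+1) θ - xx k θ‖ ≤ ε := by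
    intro k hk θ hθ
    have := (hmain (k+1) hk θ hθ).2 (by omega)
    simpa using this
  have hxxK : ∀ k, k ≤ Nn → ∀ θ ∈ Icc (0:ℝ) 1, xx k θ ∈ K := by
    intro k hk θ hθ
    rw [hK, Set.mem_preimage, (hmain k hk θ hθ).1]
    exact ⟨_, ⟨hsk k hk, hθ⟩, rfl⟩
  have h0mem : (0:ℝ) ∈ Icc (0:ℝ) 1 := ⟨le_refl 0, zero_le_one⟩
  have h1mem : (1:ℝ) ∈ Icc (0:ℝ) 1 := ⟨zero_le_one, le_refl 1⟩
  -- antipodal symmetry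
  have hanti : ∀ k, k ≤ Nn → xx k 1 = - xx k 0 := by
    intro k
    induction k with
    | zero =>
      intro _
      rw [hxx0, hxx0]
      exact hγ1
    | succ k IH =>
      intro hk1
      have hk : k ≤ Nn := le_trans (Nat.le_succ k) hk1
      have hIH := IH hk
      have hv := hmain (k+1) hk1 0 h0mem
      have hcand1 : q (-(xx (k+1) 0)) = H (sk (k+1), 1) := by
        rw [hqeven, hv.1, hHper]
      have hcand2 : ‖(-(xx (k+1) 0)) - xx k 1‖ ≤ ε := by
        rw [hIH]
        have he : (-(xx (k+1) 0)) - (- xx k 0) = -(xx (k+1) 0 - xx k 0) := by abel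
        rw [he, norm_neg]
        exact hdist k hk1 0 h0mem
      have hex1 : ∃ w, q w = H (sk (k+1), 1) ∧ ‖w - xx k 1‖ ≤ ε := ⟨_, hcand1, hcand2⟩
      have hspec1 := Classical.epsilon_spec hex1
      rw [hxxsucc]
      refine huniq (xx k 1) _ _ ?_ ?_ hspec1.2 hcand2
      · rw [hK, Set.mem_preimage, hspec1.1]
        exact ⟨_, ⟨hsk (k+1) hk1, h1mem⟩, rfl⟩
      · rw [hspec1.1, hcand1]
  -- continuity of the discrete lifts
  have hcont : ∀ k, k ≤ Nn → ContinuousOn (xx k) (Icc (0:ℝ) 1) := by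
    intro k
    induction k with
    | zero =>
      intro _
      have hxg : xx 0 = γ := funext hxx0
      rw [hxg]
      exact hγc.continuousOn
    | succ k IH =>
      intro hk1
      have hk : k ≤ Nn := le_trans (Nat.le_succ k) hk1
      have IH' := IH hk
      intro θ₀ hθ₀
      have key : Filter.Tendsto (xx (k+1)) (nhdsWithin θ₀ (Icc (0:ℝ) 1))
          (nhds (xx (k+1) θ₀)) := by
        apply Filter.tendsto_of_subseq_tendsto
        intro ns hns
        have hmem : ∀ᶠ j in Filter.atTop, ns j ∈ Icc (0:ℝ) 1 :=
          hns.eventually eventually_mem_nhdsWithin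
        obtain ⟨J₀, hJ₀⟩ := Filter.eventually_atTop.mp hmem
        have hvalK : ∀ j : ℕ, xx (k+1) (ns (j + J₀)) ∈ K := fun j =>
          hxxK (k+1) hk1 _ (hJ₀ _ (Nat.le_add_left _ _))
        obtain ⟨w, hwK, φ, hφmono, hφtend⟩ := hKcomp.tendsto_subseq hvalK
        refine ⟨fun j => φ j + J₀, ?_⟩
        have hms : Filter.Tendsto (fun j => ns (φ j + J₀)) Filter.atTop
            (nhdsWithin θ₀ (Icc (0:ℝ) 1)) := by
          apply hns.comp
          exact (Filter.tendsto_add_atTop_nat J₀).comp hφmono.tendsto_atTop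
        have hmsIcc : ∀ j, ns (φ j + J₀) ∈ Icc (0:ℝ) 1 := fun j => hJ₀ _ (Nat.le_add_left _ _)
        have hmsnhds : Filter.Tendsto (fun j => ns (φ j + J₀)) Filter.atTop (nhds θ₀) :=
          hms.mono_right nhdsWithin_le_nhds
        have hqw : q w = H (sk (k+1), θ₀) := by
          have l1 : Filter.Tendsto (fun j => q (xx (k+1) (ns (φ j + J₀)))) Filter.atTop
              (nhds (q w)) := (hqc.continuousAt.tendsto).comp hφtend
          have l2 : (fun j => q (xx (k+1) (ns (φ j + J₀))))
              = fun j => H (sk (k+1), ns (φ j + J₀)) := by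
            funext j
            exact (hmain (k+1) hk1 _ (hmsIcc j)).1
          rw [l2] at l1
          have l3 : Filter.Tendsto (fun j => H (sk (k+1), ns (φ j + J₀))) Filter.atTop
              (nhds (H (sk (k+1), θ₀))) := by
            have lp : Filter.Tendsto (fun j => ((sk (k+1), ns (φ j + J₀)) : ℝ × ℝ))
                Filter.atTop (nhds ((sk (k+1), θ₀) : ℝ × ℝ)) :=
              tendsto_const_nhds.prodMk_nhds hmsnhds
            exact (hHc.continuousAt.tendsto).comp lp
          exact tendsto_nhds_unique l1 l3
        have hwnear : ‖w - xx k θ₀‖ ≤ ε := by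
          have l4 : Filter.Tendsto (fun j => xx k (ns (φ j + J₀))) Filter.atTop
              (nhds (xx k θ₀)) := (IH' θ₀ hθ₀).tendsto.comp hms
          have l5 : Filter.Tendsto
              (fun j => ‖xx (k+1) (ns (φ j + J₀)) - xx k (ns (φ j + J₀))‖)
              Filter.atTop (nhds ‖w - xx k θ₀‖) := (hφtend.sub l4).norm
          apply le_of_tendsto l5
          filter_upwards with j
          exact hdist k hk1 _ (hmsIcc j)
        have hweq : w = xx (k+1) θ₀ := by
          refine huniq (xx k θ₀) w (xx (k+1) θ₀) hwK ?_ hwnear ?_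
          · rw [hqw, (hmain (k+1) hk1 θ₀ hθ₀).1]
          · exact hdist k hk1 θ₀ hθ₀
        rw [← hweq]
        exact hφtend
      exact key
  -- conclusion
  have hNnle : Nn ≤ Nn := le_refl _
  have hskNn : sk Nn = 1 := by
    rw [hskapp]
    field_simp
  set v₀ := xx Nn 0 with hv₀
  have hv₀K : v₀ ∈ K := hxxK Nn hNnle 0 h0mem
  have hv₀pos : 0 < ‖v₀‖ := lt_of_lt_of_le hδ₀pos (hKnorm v₀ hv₀K)
  have hphiq : ∀ θ ∈ Icc (0:ℝ) 1, q (xx Nn θ) = H (1, 0) := by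
    intro θ hθ
    rw [(hmain Nn hNnle θ hθ).1, hskNn, hHtop]
  have hdichφ : ∀ θ ∈ Icc (0:ℝ) 1, xx Nn θ = v₀ ∨ xx Nn θ = -v₀ := by
    intro θ hθ
    exact hqdich _ _ (by rw [hphiq θ hθ, hv₀, ← hphiq 0 h0mem])
  have hanti' : xx Nn 1 = - v₀ := hanti Nn hNnle
  set g : ℝ → ℝ := fun θ => ‖xx Nn θ - v₀‖ with hg
  have hgcont : ContinuousOn g (Icc (0:ℝ) 1) := ((hcont Nn hNnle).sub continuousOn_const).norm
  have hg0 : g 0 = 0 := by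
    rw [hg]
    simp [hv₀]
  have hg1 : g 1 = 2 * ‖v₀‖ := by
    rw [hg]
    simp only []
    rw [hanti']
    have he2 : -v₀ - v₀ = -((2:ℝ) • v₀) := by
      rw [two_smul]; abel
    rw [he2, norm_neg, norm_smul]
    simp
  have hiv := intermediate_value_Icc (zero_le_one) hgcont
  have hmemiv : ‖v₀‖ ∈ Icc (g 0) (g 1) := by
    rw [hg0, hg1]
    constructor
    · positivity
    · nlinarith
  obtain ⟨θs, hθs, hgθ⟩ := hiv hmemiv
  rcases hdichφ θs hθs with h | h
  · have : g θs = 0 := by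
      rw [hg]
      simp [h]
    rw [hgθ] at this
    linarith
  · have : g θs = 2 * ‖v₀‖ := by
      rw [hg]
      simp only []
      rw [h]
      have he2 : -v₀ - v₀ = -((2:ℝ) • v₀) := by
        rw [two_smul]; abel
      rw [he2, norm_neg, norm_smul]
      simp
    rw [hgθ] at this
    linarith


end CharVar

set_option maxHeartbeats 1600000 in
theorem stmt7 (n : ℕ) (hn : 3 ≤ n) (c : Fin n → Fin n → Fin n → ℝ)
    (hc : IsParamColl n c) :
    ∃ ξ : Fin n → ℝ, ξ ≠ 0 ∧ (pSymb ξ c).det = 0 := by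
  classical
  by_contra hcon
  push_neg at hcon
  have hdet : ∀ ξ : Fin n → ℝ, ξ ≠ 0 → (pSymb ξ c).det ≠ 0 := hcon
  haveI : Nonempty (Fin n) := ⟨⟨0, by omega⟩⟩
  set i0 : Fin n := ⟨0, by omega⟩ with hi0
  set i1 : Fin n := ⟨1, by omega⟩ with hi1
  have hi01 : i0 ≠ i1 := by
    simp [hi0, hi1, Fin.ext_iff]
  set e₁ : Fin n → ℝ := Pi.single i0 1 with he₁
  set e₂ : Fin n → ℝ := Pi.single i1 1 with he₂
  set q : (Fin n → ℝ) → (Fin n → ℝ) := fun x => CharVar.mulv c x x with hqdef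
  have hqc : Continuous q := by
    have hrw : q = (fun pp : (Fin n → ℝ) × (Fin n → ℝ) => CharVar.mulCLM c pp.1 pp.2)
        ∘ (fun x => (x, x)) := by
      funext x
      simp [hqdef, Function.comp, CharVar.mulCLM_apply]
    rw [hrw]
    exact ((CharVar.mulCLM c).isBoundedBilinearMap.continuous).comp
      (continuous_id.prodMk continuous_id)
  have hq0 : q 0 = 0 := CharVar.mulv_zero_zero c
  have hqzero : ∀ x, q x = 0 → x = 0 := fun x h => CharVar.sq_eq_zero hdet h
  have hqeven : ∀ x, q (-x) = q x := fun x => CharVar.mulv_neg_neg c x x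
  have hqdich : ∀ x y, q x = q y → x = y ∨ x = -y := fun x y h =>
    CharVar.sq_dich hc hdet x y h
  have hqopen : ∀ x, x ≠ 0 → Filter.map q (nhds x) = nhds (q x) := fun x hx =>
    CharVar.q_open hc hdet x hx
  -- lower quadratic bound
  have hsphne : (Metric.sphere (0 : Fin n → ℝ) 1).Nonempty :=
    NormedSpace.sphere_nonempty.mpr zero_le_one
  obtain ⟨x₀, hx₀mem, hx₀min⟩ := (isCompact_sphere (0 : Fin n → ℝ) 1).exists_isMinOn hsphne
    (hqc.norm.continuousOn)
  set m : ℝ := ‖q x₀‖ with hmdef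
  have hx₀ne : x₀ ≠ 0 := by
    intro h
    rw [Metric.mem_sphere, h] at hx₀mem
    simp at hx₀mem
  have hmpos : 0 < m := by
    rw [hmdef]
    refine norm_pos_iff.mpr fun h => hx₀ne (hqzero _ h)
  have hqlow : ∀ x, m * ‖x‖ ^ 2 ≤ ‖q x‖ := by
    intro x
    by_cases hx : x = 0
    · subst hx
      rw [hq0]
      simp
    · have hnx : (0:ℝ) < ‖x‖ := norm_pos_iff.mpr hx
      have huus : (‖x‖⁻¹ • x) ∈ Metric.sphere (0 : Fin n → ℝ) 1 := by
        rw [Metric.mem_sphere, dist_zero_right, norm_smul, Real.norm_eq_abs, abs_of_pos (inv_pos.mpr hnx)]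
        field_simp
      have h1 : m ≤ ‖q (‖x‖⁻¹ • x)‖ := isMinOn_iff.mp hx₀min _ huus
      have h2 : q x = (‖x‖ ^ 2) • q (‖x‖⁻¹ • x) := by
        have hxx : ‖x‖ • (‖x‖⁻¹ • x) = x := by
          rw [smul_smul]
          field_simp
          rw [one_smul]
        calc q x = q (‖x‖ • (‖x‖⁻¹ • x)) := by rw [hxx]
        _ = (‖x‖ ^ 2) • q (‖x‖⁻¹ • x) := CharVar.q_smul_sq c _ _
      rw [h2, norm_smul, Real.norm_eq_abs, abs_of_pos (pow_pos hnx 2)]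
      calc m * ‖x‖ ^ 2 = ‖x‖ ^ 2 * m := by ring
      _ ≤ ‖x‖ ^ 2 * ‖q (‖x‖⁻¹ • x)‖ := by
          apply mul_le_mul_of_nonneg_left h1 (by positivity)
  -- geometric data
  have h11 : CharVar.mulv c e₁ e₁ = e₁ := by
    rw [he₁]
    exact CharVar.mulv_single hc i0
  have h22 : CharVar.mulv c e₂ e₂ = e₂ := by
    rw [he₂]
    exact CharVar.mulv_single hc i1
  set p : Fin n → ℝ := CharVar.mulv c e₁ e₂ with hpdef
  have h21 : CharVar.mulv c e₂ e₁ = p := by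
    rw [hpdef]
    exact CharVar.mulv_comm hc e₂ e₁
  set z : Fin n → ℝ := (2⁻¹ : ℝ) • (e₁ + e₂) with hzdef
  set wv : Fin n → ℝ := (2⁻¹ : ℝ) • (e₁ - e₂) with hwvdef
  set S₀ : Submodule ℝ (Fin n → ℝ) := Submodule.span ℝ ({wv, p} : Set (Fin n → ℝ)) with hS₀
  have hS₀ne : S₀ ≠ ⊤ := by
    intro htop
    have h1 : (({wv, p} : Finset (Fin n → ℝ)) : Set (Fin n → ℝ)).finrank ℝ
        ≤ ({wv, p} : Finset (Fin n → ℝ)).card := finrank_span_finset_le_card _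
    have h2 : ({wv, p} : Finset (Fin n → ℝ)).card ≤ 2 :=
      le_trans (Finset.card_insert_le _ _) (by simp)
    have h3 : (({wv, p} : Finset (Fin n → ℝ)) : Set (Fin n → ℝ)) = ({wv, p} : Set (Fin n → ℝ)) := by
      simp
    have h4 : Module.finrank ℝ S₀ ≤ 2 := by
      rw [hS₀, ← h3]
      exact le_trans h1 h2
    rw [htop] at h4
    rw [finrank_top] at h4
    have h5 : Module.finrank ℝ (Fin n → ℝ) = n := by
      rw [Module.finrank_pi]
      simp
    omega
  obtain ⟨u, huz⟩ : ∃ u : Fin n → ℝ, (z ∈ S₀ → u ∉ S₀) ∧ (z ∉ S₀ → u = 0) := by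
    by_cases hz : z ∈ S₀
    · obtain ⟨u, hu⟩ : ∃ u, u ∉ S₀ := by
        by_contra hall
        push_neg at hall
        exact hS₀ne (Submodule.eq_top_iff'.mpr hall)
      exact ⟨u, fun _ => hu, fun h => absurd hz h⟩
    · exact ⟨0, fun h => absurd h hz, fun _ => rfl⟩
  set γ : ℝ → (Fin n → ℝ) :=
    fun θ => Real.cos (Real.pi * θ) • e₁ + Real.sin (Real.pi * θ) • e₂ with hγdef
  have hγc : Continuous γ := by
    apply Continuous.add
    · exact (Real.continuous_cos.comp (continuous_const.mul continuous_id)).smul continuous_const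
    · exact (Real.continuous_sin.comp (continuous_const.mul continuous_id)).smul continuous_const
  set aF : ℝ → ℝ := fun s => min 1 (max 0 (2 - 2*s)) with haFdef
  set bF : ℝ → ℝ := fun s => min 1 (max 0 (2*s)) with hbFdef
  have haFc : Continuous aF := by
    apply continuous_const.min
    apply continuous_const.max
    exact continuous_const.sub (continuous_const.mul continuous_id)
  have hbFc : Continuous bF := by
    apply continuous_const.min
    apply continuous_const.max
    exact continuous_const.mul continuous_id
  set H : ℝ × ℝ → (Fin n → ℝ) := fun sp =>
    z + aF sp.1 • (Real.cos (2*(Real.pi*sp.2)) • wv + Real.sin (2*(Real.pi*sp.2)) • p)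
      + bF sp.1 • u with hHdef
  have hHc : Continuous H := by
    apply Continuous.add
    apply Continuous.add
    · exact continuous_const
    · apply Continuous.smul (haFc.comp continuous_fst)
      apply Continuous.add
      · exact (Real.continuous_cos.comp
          (continuous_const.mul (continuous_const.mul continuous_snd))).smul continuous_const
      · exact (Real.continuous_sin.comp
          (continuous_const.mul (continuous_const.mul continuous_snd))).smul continuous_const
    · exact (hbFc.comp continuous_fst).smul continuous_const
  -- bilinear expansion
  have hexpand : ∀ A B : ℝ, CharVar.mulv c (A • e₁ + B • e₂) (A • e₁ + B • e₂)
      = (A ^ 2) • e₁ + (B ^ 2) • e₂ + (2 * A * B) • p := by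
    intro A B
    rw [CharVar.mulv_add_left, CharVar.mulv_smul_left, CharVar.mulv_smul_left,
      CharVar.mulv_add_right, CharVar.mulv_add_right,
      CharVar.mulv_smul_right, CharVar.mulv_smul_right,
      CharVar.mulv_smul_right, CharVar.mulv_smul_right,
      h11, h22, h21]
    rw [show CharVar.mulv c e₁ e₂ = p from rfl]
    module
  have haF0 : aF 0 = 1 := by
    rw [haFdef]
    norm_num
  have hbF0 : bF 0 = 0 := by
    rw [hbFdef]
    norm_num
  have haF1 : aF 1 = 0 := by
    rw [haFdef]
    norm_num
  have hH0 : ∀ θ : ℝ, H (0, θ) = q (γ θ) := by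
    intro θ
    have hA : Real.cos (Real.pi * θ) ^ 2 = 1/2 + Real.cos (2*(Real.pi*θ))/2 :=
      Real.cos_sq (Real.pi * θ)
    have hB : Real.sin (Real.pi * θ) ^ 2 = 1/2 - Real.cos (2*(Real.pi*θ))/2 := by
      rw [Real.sin_sq, hA]
      ring
    have hAB : 2 * Real.cos (Real.pi*θ) * Real.sin (Real.pi*θ) = Real.sin (2*(Real.pi*θ)) := by
      rw [Real.sin_two_mul]
      ring
    show z + aF 0 • (Real.cos (2*(Real.pi*θ)) • wv + Real.sin (2*(Real.pi*θ)) • p) + bF 0 • u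
      = CharVar.mulv c (γ θ) (γ θ)
    rw [haF0, hbF0, hγdef]
    show z + (1:ℝ) • (Real.cos (2*(Real.pi*θ)) • wv + Real.sin (2*(Real.pi*θ)) • p) + (0:ℝ) • u
      = CharVar.mulv c (Real.cos (Real.pi * θ) • e₁ + Real.sin (Real.pi * θ) • e₂)
          (Real.cos (Real.pi * θ) • e₁ + Real.sin (Real.pi * θ) • e₂)
    rw [hexpand, hA, hB, ← hAB, hzdef, hwvdef]
    module
  have hHtop : ∀ θ : ℝ, H (1, θ) = H (1, 0) := by
    intro θ
    show z + aF 1 • _ + bF 1 • u = z + aF 1 • _ + bF 1 • u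
    rw [haF1, zero_smul, zero_smul]
  have hHper : ∀ s : ℝ, H (s, 0) = H (s, 1) := by
    intro s
    show z + aF s • (Real.cos (2*(Real.pi*0)) • wv + Real.sin (2*(Real.pi*0)) • p) + bF s • u
      = z + aF s • (Real.cos (2*(Real.pi*1)) • wv + Real.sin (2*(Real.pi*1)) • p) + bF s • u
    norm_num [Real.cos_two_pi, Real.sin_two_pi]
  have hγ1 : γ 1 = - γ 0 := by
    rw [hγdef]
    show Real.cos (Real.pi * 1) • e₁ + Real.sin (Real.pi * 1) • e₂
      = -(Real.cos (Real.pi * 0) • e₁ + Real.sin (Real.pi * 0) • e₂)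
    norm_num [Real.cos_pi, Real.sin_pi]
  have hwvS : wv ∈ S₀ := Submodule.subset_span (Set.mem_insert _ _)
  have hpS : p ∈ S₀ := Submodule.subset_span (Set.mem_insert_of_mem _ rfl)
  have hHne : ∀ pp : ℝ × ℝ, pp ∈ Icc (0:ℝ) 1 ×ˢ Icc (0:ℝ) 1 → H pp ≠ 0 := by
    rintro ⟨s, θ⟩ hpp hzero
    have hzero' : z + aF s • (Real.cos (2*(Real.pi*θ)) • wv + Real.sin (2*(Real.pi*θ)) • p)
        + bF s • u = 0 := hzero
    have hXS : aF s • (Real.cos (2*(Real.pi*θ)) • wv + Real.sin (2*(Real.pi*θ)) • p) ∈ S₀ :=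
      Submodule.smul_mem _ _ (Submodule.add_mem _ (Submodule.smul_mem _ _ hwvS)
        (Submodule.smul_mem _ _ hpS))
    by_cases hz : z ∈ S₀
    · have hbzero : bF s = 0 := by
        by_contra hb
        apply huz.1 hz
        have hbu : bF s • u = -(z + aF s •
            (Real.cos (2*(Real.pi*θ)) • wv + Real.sin (2*(Real.pi*θ)) • p)) :=
          eq_neg_of_add_eq_zero_right hzero'
        have hmem : bF s • u ∈ S₀ := by
          rw [hbu]
          exact Submodule.neg_mem _ (Submodule.add_mem _ hz hXS)
        exact (Submodule.smul_mem_iff _ hb).mp hmem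
      have hs0 : s = 0 := by
        have hsge : (0:ℝ) ≤ s := hpp.1.1
        by_contra hsne
        have hspos : 0 < s := lt_of_le_of_ne hsge (Ne.symm hsne)
        have h1 : (0:ℝ) < max 0 (2*s) := lt_max_of_lt_right (by linarith)
        have h2 : (0:ℝ) < bF s := by
          rw [hbFdef]
          exact lt_min one_pos h1
        rw [hbzero] at h2
        exact lt_irrefl _ h2
      subst hs0
      have hγth : q (γ θ) = 0 := by
        rw [← hH0 θ]
        exact hzero
      have hγ0 : γ θ = 0 := hqzero _ hγth
      have hcos : Real.cos (Real.pi * θ) = 0 := by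
        have h := congrFun hγ0 i0
        rw [hγdef] at h
        have he1v : e₁ i0 = 1 := by
          rw [he₁]
          exact Pi.single_eq_same i0 1
        have he2v : e₂ i0 = 0 := by
          rw [he₂]
          exact Pi.single_eq_of_ne hi01 1
        simpa [he1v, he2v] using h
      have hsin : Real.sin (Real.pi * θ) = 0 := by
        have h := congrFun hγ0 i1
        rw [hγdef] at h
        have he1v : e₁ i1 = 0 := by
          rw [he₁]
          exact Pi.single_eq_of_ne (Ne.symm hi01) 1
        have he2v : e₂ i1 = 1 := by
          rw [he₂]
          exact Pi.single_eq_same i1 1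
        simpa [he1v, he2v] using h
      have := Real.sin_sq_add_cos_sq (Real.pi * θ)
      rw [hcos, hsin] at this
      norm_num at this
    · have hu0 : u = 0 := huz.2 hz
      apply hz
      rw [hu0, smul_zero, add_zero] at hzero'
      have hzeq : z = -(aF s • (Real.cos (2*(Real.pi*θ)) • wv + Real.sin (2*(Real.pi*θ)) • p)) :=
        eq_neg_of_add_eq_zero_left hzero'
      rw [hzeq]
      exact Submodule.neg_mem _ hXS
  exact CharVar.core q γ H hqc hγc hHc hq0 hqeven hqdich hqopen m hmpos hqlow
    hH0 hHtop hHper hHne hγ1
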